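/- Let θ* = arcsin(1/(2√2)). Then in ℂ the following distance identities hold: |√2·e^{iπ/4} − e^{iπ/6}| = |1 − e^{iπ/6}| = √(2 − √3) and |√2·e^{iπ/4} − √2·e^{iθ*}| = |1 − √2·e^{iθ*}| = √(3 − √7); moreover √(2 − √3) < √(3 − √7). Consequently, for δ > 0, the non-overlap conditions 2·(δ/√2) ≤ d for all four of these distances d hold if and only if δ ≤ √((2 − √3)/2) (≈ 0.365), which is the maximum minimum-distance guarantee δ_max achievable by the rotation scheme in the QPSK case. -/

import Mathlib

set_option maxHeartbeats 1000000

private lemma abs_eq_sqrt (z : ℂ) : ‖z‖ = Real.sqrt (z.re^2 + z.im^2) := by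
  rw [Complex.norm_def, Complex.normSq_apply]; ring_nf

private lemma sq3 : Real.sqrt 3 ^ 2 = 3 := Real.sq_sqrt (by norm_num)
private lemma sq7 : Real.sqrt 7 ^ 2 = 7 := Real.sq_sqrt (by norm_num)
private lemma sq2 : Real.sqrt 2 ^ 2 = 2 := Real.sq_sqrt (by norm_num)

private lemma sin_th : Real.sin (Real.arcsin (1 / (2 * Real.sqrt 2))) = 1 / (2 * Real.sqrt 2) := by
  have h2 : (1:ℝ) ≤ Real.sqrt 2 := by
    nlinarith [sq2, Real.sqrt_nonneg 2]
  have hx0 : (0:ℝ) ≤ 1 / (2 * Real.sqrt 2) := by positivity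
  exact Real.sin_arcsin (by linarith) (by rw [div_le_one (by positivity)]; linarith)

private lemma cos_th :
    Real.sqrt 2 * Real.cos (Real.arcsin (1 / (2 * Real.sqrt 2))) = Real.sqrt 7 / 2 := by
  have h2 : Real.sqrt 2 > 0 := by positivity
  have hx : (1 / (2 * Real.sqrt 2)) ^ 2 = 1 / 8 := by
    rw [div_pow, mul_pow]; rw [sq2]; norm_num
  rw [Real.cos_arcsin, hx]
  have : (1:ℝ) - 1/8 = 7/8 := by norm_num
  rw [this]
  have h1 : Real.sqrt 2 * Real.sqrt (7/8) = Real.sqrt (2 * (7/8)) :=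
    (Real.sqrt_mul (by norm_num) _).symm
  have h2' : (2:ℝ) * (7/8) = 7/4 := by norm_num
  have h3 : Real.sqrt (7/4) = Real.sqrt 7 / 2 := by
    rw [Real.sqrt_div (by norm_num : (0:ℝ) ≤ 7),
      show (4:ℝ) = 2^2 by norm_num, Real.sqrt_sq (by norm_num : (0:ℝ) ≤ 2)]
  rw [h1, h2', h3]

private lemma sin_th2 : Real.sqrt 2 * Real.sin (Real.arcsin (1 / (2 * Real.sqrt 2))) = 1 / 2 := by
  rw [sin_th]
  have h2 : Real.sqrt 2 > 0 := by positivity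
  field_simp

/-- **Example 7 (upper bound on δ for QPSK).** With `θ* = arcsin(1/(2√2))`, the distances
between the shifted circle centres `e^{iπ/6}`, `√2·e^{iθ*}` and the singular fade states
`1`, `√2·e^{iπ/4}` are `√(2 − √3)` and `√(3 − √7)` respectively, with
`√(2 − √3) < √(3 − √7)`; hence the non-overlap conditions `2·(δ/√2) ≤ d` for all four of
these distances hold exactly when `δ ≤ √((2 − √3)/2) ≈ 0.365`, the maximal minimum
distance guarantee `δ_max` for the QPSK rotation scheme. -/
theorem qpsk_delta_max
    (d₁ d₂ d₃ d₄ : ℝ)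
    (hd₁ : d₁ = ‖(Real.sqrt 2 : ℂ) *
        Complex.exp ((↑(Real.pi / 4)) * Complex.I) -
        Complex.exp ((↑(Real.pi / 6)) * Complex.I)‖)
    (hd₂ : d₂ = ‖(1 : ℂ) - Complex.exp ((↑(Real.pi / 6)) * Complex.I)‖)
    (hd₃ : d₃ = ‖(Real.sqrt 2 : ℂ) *
        Complex.exp ((↑(Real.pi / 4)) * Complex.I) -
        (Real.sqrt 2 : ℂ) *
          Complex.exp ((↑(Real.arcsin (1 / (2 * Real.sqrt 2)))) * Complex.I)‖)
    (hd₄ : d₄ = ‖(1 : ℂ) - (Real.sqrt 2 : ℂ) *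
          Complex.exp ((↑(Real.arcsin (1 / (2 * Real.sqrt 2)))) * Complex.I)‖) :
    d₁ = Real.sqrt (2 - Real.sqrt 3) ∧
    d₂ = Real.sqrt (2 - Real.sqrt 3) ∧
    d₃ = Real.sqrt (3 - Real.sqrt 7) ∧
    d₄ = Real.sqrt (3 - Real.sqrt 7) ∧
    Real.sqrt (2 - Real.sqrt 3) < Real.sqrt (3 - Real.sqrt 7) ∧
    (∀ δ : ℝ, 0 < δ →
      ((2 * (δ / Real.sqrt 2) ≤ d₁ ∧ 2 * (δ / Real.sqrt 2) ≤ d₂ ∧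
        2 * (δ / Real.sqrt 2) ≤ d₃ ∧ 2 * (δ / Real.sqrt 2) ≤ d₄) ↔
        δ ≤ Real.sqrt ((2 - Real.sqrt 3) / 2))) := by
  have h2pos : (0:ℝ) < Real.sqrt 2 := by positivity
  have hcos6 := Real.cos_pi_div_six
  have hsin6 := Real.sin_pi_div_six
  have hcos4 := Real.cos_pi_div_four
  have hsin4 := Real.sin_pi_div_four
  have H1 : d₁ = Real.sqrt (2 - Real.sqrt 3) := by
    rw [hd₁, abs_eq_sqrt]
    simp only [Complex.sub_re, Complex.sub_im, Complex.mul_re, Complex.mul_im,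
      Complex.ofReal_re, Complex.ofReal_im, Complex.exp_ofReal_mul_I_re,
      Complex.exp_ofReal_mul_I_im, hcos6, hsin6, hcos4, hsin4, zero_mul, mul_zero,
      sub_zero, zero_add]
    congr 1
    nlinarith [sq2, sq3]
  have H2 : d₂ = Real.sqrt (2 - Real.sqrt 3) := by
    rw [hd₂, abs_eq_sqrt]
    simp only [Complex.sub_re, Complex.sub_im, Complex.one_re, Complex.one_im,
      Complex.exp_ofReal_mul_I_re, Complex.exp_ofReal_mul_I_im, hcos6, hsin6]
    congr 1
    nlinarith [sq3]
  have H3 : d₃ = Real.sqrt (3 - Real.sqrt 7) := by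
    rw [hd₃, abs_eq_sqrt]
    simp only [Complex.sub_re, Complex.sub_im, Complex.mul_re, Complex.mul_im,
      Complex.ofReal_re, Complex.ofReal_im, Complex.exp_ofReal_mul_I_re,
      Complex.exp_ofReal_mul_I_im, hcos4, hsin4, zero_mul, mul_zero,
      sub_zero, zero_add]
    congr 1
    have hc := cos_th
    have hs := sin_th2
    nlinarith [sq2, sq7, hc, hs]
  have H4 : d₄ = Real.sqrt (3 - Real.sqrt 7) := by
    rw [hd₄, abs_eq_sqrt]
    simp only [Complex.sub_re, Complex.sub_im, Complex.one_re, Complex.one_im,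
      Complex.mul_re, Complex.mul_im, Complex.ofReal_re, Complex.ofReal_im,
      Complex.exp_ofReal_mul_I_re, Complex.exp_ofReal_mul_I_im, zero_mul, mul_zero,
      sub_zero, zero_add]
    congr 1
    have hc := cos_th
    have hs := sin_th2
    nlinarith [sq7, hc, hs]
  have h3le : Real.sqrt 3 ≤ 2 := by nlinarith [sq3, Real.sqrt_nonneg 3]
  have h23 : (0:ℝ) ≤ 2 - Real.sqrt 3 := by linarith
  have Hlt : Real.sqrt (2 - Real.sqrt 3) < Real.sqrt (3 - Real.sqrt 7) := by
    apply Real.sqrt_lt_sqrt h23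
    have h7lt : Real.sqrt 7 < 1 + Real.sqrt 3 := by
      have hsq : (7:ℝ) < (1 + Real.sqrt 3)^2 := by nlinarith [sq3, Real.sqrt_nonneg 3]
      calc Real.sqrt 7 < Real.sqrt ((1 + Real.sqrt 3)^2) :=
            Real.sqrt_lt_sqrt (by norm_num) hsq
        _ = 1 + Real.sqrt 3 := Real.sqrt_sq (by positivity)
    linarith
  refine ⟨H1, H2, H3, H4, Hlt, ?_⟩
  intro δ hδ
  have hkey : 2 * (δ / Real.sqrt 2) = Real.sqrt 2 * δ := by
    field_simp
    nlinarith [sq2]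
  have hsqrt_half : Real.sqrt ((2 - Real.sqrt 3) / 2) = Real.sqrt (2 - Real.sqrt 3) / Real.sqrt 2 := by
    rw [Real.sqrt_div h23]
  constructor
  · rintro ⟨h1, -, -, -⟩
    rw [H1, hkey] at h1
    rw [hsqrt_half, le_div_iff₀ h2pos]
    linarith [mul_comm (Real.sqrt 2) δ]
  · intro h
    rw [hsqrt_half, le_div_iff₀ h2pos] at h
    have hmain : Real.sqrt 2 * δ ≤ Real.sqrt (2 - Real.sqrt 3) := by
      linarith [mul_comm δ (Real.sqrt 2)]
    rw [H1, H2, H3, H4, hkey]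
    exact ⟨hmain, hmain, hmain.trans Hlt.le, hmain.trans Hlt.le⟩
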